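/- Let a > 0, K > 0, C ≥ 0 with 4K > a², and suppose |f(t, v + x*)| ≤ C·|v| for all t and v. If C < a·√(4K − a²)/4, then the equilibrium x* of the controlled equation ẍ(t) + a·ẋ(t) + f(t, x(h(t))) = −K·[x(t) − x*] is globally asymptotically stable: every twice differentiable solution x satisfies x(t) → x* as t → ∞. -/

import Mathlib

open Filter MeasureTheory intervalIntegral


lemma aux_exp_integral (c A B : ℝ) (hc : 0 < c) :
    ∫ s in A..B, Real.exp (-(c*(B-s))) = (1 - Real.exp (-(c*(B-A))))/c := by
  have hder : ∀ s ∈ Set.uIcc A B,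
      HasDerivAt (fun u => Real.exp (-(c*(B-u)))/c) (Real.exp (-(c*(B-s)))) s := by
    intro s _
    have h1 : HasDerivAt (fun u : ℝ => -(c*(B-u))) c s := by
      simpa using (((hasDerivAt_id s).const_sub B).const_mul c).fun_neg
    have := (h1.exp).div_const c
    simpa [mul_div_assoc, mul_div_cancel_right₀, hc.ne'] using this
  have hcont : Continuous fun s : ℝ => Real.exp (-(c*(B-s))) := by continuity
  have := intervalIntegral.integral_eq_sub_of_hasDerivAt hder (hcont.intervalIntegrable A B)
  rw [this]
  simp [sub_div, Real.exp_zero]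

lemma aux_exp_integral_le (c A B : ℝ) (hc : 0 < c) :
    ∫ s in A..B, Real.exp (-(c*(B-s))) ≤ 1/c := by
  rw [aux_exp_integral c A B hc]
  have h0 : 0 ≤ Real.exp (-(c*(B-A))) := Real.exp_nonneg _
  gcongr
  linarith



set_option maxHeartbeats 1000000 in
/-- Theorem 4, part c): if 4K > a² and C < a√(4K − a²)/4, the equilibrium x* of
ẍ(t) + a·ẋ(t) + f(t, x(h(t))) = −K[x(t) − x*] is globally asymptotically stable. -/
theorem proportional_control_stability_case_c
    (t₀ a K C xs : ℝ)
    (f : ℝ → ℝ → ℝ) (h : ℝ → ℝ)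
    (hhmeas : Measurable h) (hhle : ∀ t, h t ≤ t) (hhtend : Tendsto h atTop atTop)
    (ha : 0 < a) (hK : 0 < K) (hC : 0 ≤ C) (h4K : 4 * K > a ^ 2)
    (hfbound : ∀ t v, |f t (v + xs)| ≤ C * |v|)
    (hcond : C < a * Real.sqrt (4 * K - a ^ 2) / 4)
    (x x' x'' : ℝ → ℝ)
    (hx' : ∀ t, HasDerivAt x (x' t) t) (hx'' : ∀ t, HasDerivAt x' (x'' t) t)
    (hinit : ∃ M : ℝ, ∀ t ≤ t₀, |x t| ≤ M ∧ |x' t| ≤ M)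
    (heq : ∀ t ≥ t₀, x'' t + a * x' t + f t (x (h t)) = -K * (x t - xs)) :
    Tendsto x atTop (nhds xs) := by
  obtain ⟨M, hM⟩ := hinit
  set al : ℝ := a / 2 with hal_def
  set om : ℝ := Real.sqrt (4 * K - a ^ 2) / 2 with hom_def
  have hal : 0 < al := by positivity
  have h4K' : (0:ℝ) < 4 * K - a ^ 2 := by linarith
  have hom : 0 < om := by
    have := Real.sqrt_pos.mpr h4K'
    positivity
  have homsq : al ^ 2 + om ^ 2 = K := by
    have : Real.sqrt (4 * K - a ^ 2) ^ 2 = 4 * K - a ^ 2 := Real.sq_sqrt h4K'.le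
    field_simp [hal_def, hom_def]
    nlinarith [this]
  -- q < 1
  set q : ℝ := C / (al * om) with hq_def
  have hq0 : 0 ≤ q := by positivity
  have hq1 : q < 1 := by
    rw [hq_def, div_lt_one (by positivity)]
    calc C < a * Real.sqrt (4 * K - a ^ 2) / 4 := hcond
    _ = al * om := by rw [hal_def, hom_def]; ring
  have hCal : (1/al) * C = q * om := by
    have h5 : q * om = C / (al * om) * om := by rw [hq_def]
    rw [h5, div_mul_eq_mul_div C (al*om) om, mul_comm al om, mul_comm C om,
      mul_div_mul_left C al hom.ne', one_div_mul_eq_div]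
  set y : ℝ → ℝ := fun t => x t - xs with hy_def
  set g : ℝ → ℝ := fun s => -(x'' s) - a * x' s - K * (x s - xs) with hg_def
  have hgbound : ∀ s, t₀ ≤ s → |g s| ≤ C * |y (h s)| := by
    intro s hs
    have h1 : f s (x (h s)) = g s := by
      have := heq s hs; simp only [hg_def]; linarith
    have h2 := hfbound s (x (h s) - xs)
    rw [sub_add_cancel, h1] at h2
    exact h2
  set c : ℂ := (al : ℂ) + om * Complex.I with hc_def
  set l : ℂ := -(al : ℂ) + om * Complex.I with hl_def
  set z : ℝ → ℂ := fun t => (x' t : ℂ) + c * ((x t : ℂ) - xs) with hz_def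
  have hlre : l.re = -al := by simp [hl_def]
  -- derivative of z
  have hzd : ∀ t, HasDerivAt z (l * z t - (g t : ℂ)) t := by
    intro t
    have h1 : HasDerivAt (fun t => ((x t : ℂ) - xs)) (x' t : ℂ) t :=
      ((hx' t).ofReal_comp).sub_const _
    have h2 : HasDerivAt z ((x'' t : ℂ) + c * (x' t : ℂ)) t :=
      ((hx'' t).ofReal_comp).add (h1.const_mul c)
    have key : l * z t - (g t : ℂ) = (x'' t : ℂ) + c * (x' t : ℂ) := by
      have hKc : ((K:ℝ) : ℂ) = (al:ℂ)^2 + (om:ℂ)^2 := by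
        push_cast [← homsq]; ring
      have hac : ((a:ℝ) : ℂ) = 2 * al := by push_cast [hal_def]; ring
      simp only [hz_def, hg_def, hl_def, hc_def]
      push_cast
      rw [show ((K:ℝ):ℂ) = ((al:ℝ):ℂ)^2 + ((om:ℝ):ℂ)^2 from hKc] at *
      linear_combination ((x t : ℂ) - xs) * ((om:ℂ)^2 * Complex.I_sq) + (x' t : ℂ) * hac
    rw [key]; exact h2
  -- FTC for Z = exp(-l t) z t
  set Z : ℝ → ℂ := fun t => Complex.exp (-l * t) * z t with hZ_def
  have hZd : ∀ t : ℝ, HasDerivAt Z (-(Complex.exp (-l * (t:ℂ)) * (g t : ℂ))) t := by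
    intro t
    have he : HasDerivAt (fun t : ℝ => Complex.exp (-l * (t:ℂ))) (-l * Complex.exp (-l * (t:ℂ))) t := by
      have h1 : HasDerivAt (fun t : ℝ => -l * (t : ℂ)) (-l) t := by
        simpa using ((hasDerivAt_id t).ofReal_comp).const_mul (-l)
      simpa [mul_comm] using h1.cexp
    have := he.fun_mul (hzd t)
    convert this using 1
    · rfl
    ring
  -- continuity and measurability
  have hxc : Continuous x := continuous_iff_continuousAt.mpr fun t => (hx' t).continuousAt
  have hx'c : Continuous x' := continuous_iff_continuousAt.mpr fun t => (hx'' t).continuousAt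
  have hyc : Continuous y := hxc.sub continuous_const
  have hx''m : Measurable x'' := by
    have hdx : x'' = deriv x' := funext fun s => ((hx'' s).deriv).symm
    rw [hdx]; exact measurable_deriv _
  have hgm : Measurable g := by
    apply Measurable.sub
    apply Measurable.sub hx''m.neg (hx'c.measurable.const_mul a)
    exact ((hxc.measurable.sub measurable_const).const_mul K)
  -- bound for y on (-∞, T]
  have hYb : ∀ T, t₀ ≤ T → ∃ Y0 : ℝ, 0 ≤ Y0 ∧ ∀ r ≤ T, |y r| ≤ Y0 := by
    intro T hT
    obtain ⟨C0, hC0⟩ := (isCompact_Icc (a := t₀) (b := T)).exists_bound_of_continuousOn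
      hyc.continuousOn
    refine ⟨max (M + |xs|) (max C0 0), le_max_of_le_right (le_max_right _ _), fun r hr => ?_⟩
    rcases le_or_gt r t₀ with h1 | h1
    · have := (hM r h1).1
      have : |y r| ≤ M + |xs| := by
        simp only [hy_def]
        calc |x r - xs| ≤ |x r| + |xs| := abs_sub _ _
        _ ≤ M + |xs| := by linarith [(hM r h1).1]
      exact this.trans (le_max_left _ _)
    · have := hC0 r ⟨h1.le, hr⟩
      simp only [Real.norm_eq_abs] at this
      exact this.trans (le_max_of_le_right (le_max_left _ _))
  have hexpnorm : ∀ w : ℂ, ‖Complex.exp w‖ = Real.exp w.re := by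
    intro w; rw [Complex.norm_exp]
  have hnorm : ∀ s : ℝ, ‖Complex.exp (-l * (s:ℂ)) * (g s : ℂ)‖ = Real.exp (al * s) * |g s| := by
    intro s
    rw [norm_mul, hexpnorm, Complex.norm_real, Real.norm_eq_abs]
    congr 2
    simp [hl_def, Complex.mul_re]
  -- integrability of the complex integrand
  have hgi : ∀ t, t₀ ≤ t →
      IntervalIntegrable (fun s => Complex.exp (-l * (s:ℂ)) * (g s : ℂ)) volume t₀ t := by
    intro t ht
    obtain ⟨Y0, hY00, hY0⟩ := hYb t ht
    rw [intervalIntegrable_iff, Set.uIoc_of_le ht]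
    have hconst : IntegrableOn (fun _ : ℝ => Real.exp (al*t) * (C*Y0)) (Set.Ioc t₀ t) volume :=
      integrableOn_const measure_Ioc_lt_top.ne
    apply MeasureTheory.Integrable.mono' hconst
    · exact ((Complex.continuous_exp.comp (continuous_const.mul
        Complex.continuous_ofReal)).measurable.mul
        (Complex.measurable_ofReal.comp hgm)).aestronglyMeasurable
    · refine ((ae_restrict_iff' measurableSet_Ioc).mpr (Filter.Eventually.of_forall ?_))
      intro s hs
      rw [hnorm s]
      have h1 : |g s| ≤ C * Y0 := by
        refine (hgbound s hs.1.le).trans ?_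
        exact mul_le_mul_of_nonneg_left (hY0 _ ((hhle s).trans hs.2)) hC
      have h2 : Real.exp (al * s) ≤ Real.exp (al * t) :=
        Real.exp_le_exp.mpr (mul_le_mul_of_nonneg_left hs.2 hal.le)
      have hg0 : (0:ℝ) ≤ |g s| := abs_nonneg _
      nlinarith [Real.exp_pos (al * s)]
  -- real integrability of the kernel-weighted |g|
  have hIosc : ∀ t, t₀ ≤ t →
      IntervalIntegrable (fun s => Real.exp (-(al*(t-s))) * |g s|) volume t₀ t := by
    intro t ht
    have := ((hgi t ht).norm.const_mul (Real.exp (-(al*t))))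
    convert this using 1
    funext s
    rw [hnorm s, ← mul_assoc, ← Real.exp_add]
    ring_nf
  -- variation of constants representation
  have hrep : ∀ t, t₀ ≤ t → z t = Complex.exp (l*((t:ℂ)-t₀)) * z t₀
      - ∫ s in t₀..t, Complex.exp (l*((t:ℂ)-s)) * (g s : ℂ) := by
    intro t ht
    have hFTC := intervalIntegral.integral_eq_sub_of_hasDerivAt
      (f := Z) (f' := fun s => -(Complex.exp (-l * (s:ℂ)) * (g s : ℂ)))
      (fun s _ => hZd s) ((hgi t ht).neg)
    rw [intervalIntegral.integral_neg] at hFTC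
    have hZt : Z t = Z t₀ - ∫ s in t₀..t, Complex.exp (-l * (s:ℂ)) * (g s : ℂ) := by
      linear_combination -hFTC
    have hzt : z t = Complex.exp (l*(t:ℂ)) * Z t := by
      simp only [hZ_def, ← mul_assoc, ← Complex.exp_add]
      ring_nf
      simp
    rw [hzt, hZt, mul_sub, ← intervalIntegral.integral_const_mul]
    congr 1
    · simp only [hZ_def, ← mul_assoc, ← Complex.exp_add]
      ring_nf
    · apply intervalIntegral.integral_congr
      intro s _
      show Complex.exp (l*(t:ℂ)) * (Complex.exp (-l*(s:ℂ)) * (g s : ℂ))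
          = Complex.exp (l*((t:ℂ)-(s:ℂ))) * (g s : ℂ)
      rw [← mul_assoc, ← Complex.exp_add]
      ring_nf
  -- the key inequality
  set N₀ : ℝ := ‖z t₀‖ with hN₀_def
  have hKEY : ∀ t, t₀ ≤ t → om * |y t| ≤ Real.exp (-(al*(t-t₀))) * N₀
      + ∫ s in t₀..t, Real.exp (-(al*(t-s))) * |g s| := by
    intro t ht
    have him : om * |y t| ≤ ‖z t‖ := by
      have h1 : (z t).im = om * (y t) := by
        simp [hz_def, hc_def, hy_def, Complex.add_im, Complex.mul_im]
      have h2 : |(z t).im| ≤ ‖z t‖ := Complex.abs_im_le_norm _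
      rw [h1, abs_mul, abs_of_pos hom] at h2
      exact h2
    refine him.trans ?_
    rw [hrep t ht]
    refine (norm_sub_le _ _).trans ?_
    gcongr
    · rw [norm_mul, hexpnorm]
      apply le_of_eq
      congr 2
      simp only [hl_def, Complex.mul_re, Complex.sub_re, Complex.sub_im, Complex.add_re,
        Complex.add_im, Complex.neg_re, Complex.neg_im, Complex.ofReal_re, Complex.ofReal_im,
        Complex.mul_im, Complex.I_re, Complex.I_im]
      ring
    · refine (intervalIntegral.norm_integral_le_integral_norm ht).trans ?_
      apply le_of_eq
      apply intervalIntegral.integral_congr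
      intro s _
      show ‖Complex.exp (l*((t:ℂ)-(s:ℂ))) * (g s : ℂ)‖ = Real.exp (-(al*(t-s))) * |g s|
      rw [norm_mul, hexpnorm, Complex.norm_real, Real.norm_eq_abs]
      congr 2
      simp only [hl_def, Complex.mul_re, Complex.sub_re, Complex.sub_im, Complex.add_re,
        Complex.add_im, Complex.neg_re, Complex.neg_im, Complex.ofReal_re, Complex.ofReal_im,
        Complex.mul_im, Complex.I_re, Complex.I_im]
      ring
  -- Step A: global bound on |y|
  set M' : ℝ := M + |xs| with hM'_def
  have hM'y : ∀ r, r ≤ t₀ → |y r| ≤ M' := by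
    intro r hr
    simp only [hy_def, hM'_def]
    calc |x r - xs| ≤ |x r| + |xs| := abs_sub _ _
    _ ≤ M + |xs| := by linarith [(hM r hr).1]
  have hN₀0 : 0 ≤ N₀ := norm_nonneg _
  have h1q : 0 < 1 - q := by linarith
  set Bd : ℝ := max M' (N₀ / om / (1 - q)) with hBd_def
  have hbd : ∀ s, |y s| ≤ Bd := by
    intro s0
    rcases le_or_gt s0 t₀ with hs0 | hs0
    · exact (hM'y s0 hs0).trans (le_max_left _ _)
    · obtain ⟨ts, hts, htsmax⟩ := (isCompact_Icc (a := t₀) (b := s0)).exists_isMaxOn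
        ⟨t₀, le_refl _, hs0.le⟩ ((continuous_abs.comp hyc).continuousOn)
      set S := |y ts| with hS_def
      have hS0 : 0 ≤ S := abs_nonneg _
      have hSb : ∀ r ∈ Set.Icc t₀ s0, |y r| ≤ S := fun r hr => htsmax hr
      have hSmax : ∀ r, r ≤ s0 → |y r| ≤ max M' S := by
        intro r hr
        rcases le_or_gt r t₀ with h1 | h1
        · exact (hM'y r h1).trans (le_max_left _ _)
        · exact (hSb r ⟨h1.le, hr⟩).trans (le_max_right _ _)
      have hMS0 : 0 ≤ max M' S := le_max_of_le_right hS0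
      have hts0 : t₀ ≤ ts := hts.1
      have hkey := hKEY ts hts0
      have hint : (∫ s in t₀..ts, Real.exp (-(al*(ts-s))) * |g s|)
          ≤ (1/al) * (C * max M' S) := by
        have hmono : ∀ s ∈ Set.Icc t₀ ts, Real.exp (-(al*(ts-s))) * |g s|
            ≤ Real.exp (-(al*(ts-s))) * (C * max M' S) := by
          intro s hsmem
          apply mul_le_mul_of_nonneg_left _ (Real.exp_nonneg _)
          refine (hgbound s hsmem.1).trans ?_
          apply mul_le_mul_of_nonneg_left _ hC
          exact hSmax _ ((hhle s).trans (hsmem.2.trans hts.2))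
        have hcont2 : Continuous fun s : ℝ => Real.exp (-(al*(ts-s))) * (C * max M' S) :=
          (Real.continuous_exp.comp (continuous_const.mul (continuous_const.sub continuous_id)).neg).mul
            continuous_const
        have h2 := intervalIntegral.integral_mono_on hts0 (hIosc ts hts0)
          (hcont2.intervalIntegrable _ _) hmono
        refine h2.trans ?_
        rw [intervalIntegral.integral_mul_const]
        exact mul_le_mul_of_nonneg_right (aux_exp_integral_le al t₀ ts hal)
          (mul_nonneg hC hMS0)
      have hexple : Real.exp (-(al*(ts-t₀))) ≤ 1 := by
        apply Real.exp_le_one_iff.mpr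
        have : 0 ≤ al*(ts-t₀) := mul_nonneg hal.le (by linarith)
        linarith
      have hOMS : om * S ≤ N₀ + (1/al) * (C * max M' S) := by
        refine hkey.trans ?_
        gcongr
        nlinarith
      have hyS : |y s0| ≤ S := hSb s0 ⟨hs0.le, le_refl _⟩
      rcases le_total S M' with hSM | hSM
      · exact hyS.trans (hSM.trans (le_max_left _ _))
      · have hmaxS : max M' S = S := max_eq_right hSM
        rw [hmaxS] at hOMS
        have hqS : om * S ≤ N₀ + q * om * S := by
          calc om * S ≤ N₀ + (1/al) * (C * S) := hOMS
          _ = N₀ + q * om * S := by rw [← mul_assoc, hCal]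
        have hSle : S ≤ N₀ / om / (1 - q) := by
          rw [div_div, le_div_iff₀ (mul_pos hom h1q)]
          have h6 : S*(om*(1-q)) = om*S - q*om*S := by ring
          rw [h6]; linarith
        exact hyS.trans (hSle.trans (le_max_right _ _))
  -- Step B: limsup argument
  have hbnd : Filter.IsBoundedUnder (· ≤ ·) Filter.atTop (fun t => |y t|) :=
    Filter.isBoundedUnder_of ⟨Bd, fun t => hbd t⟩
  have hbnd0 : Filter.IsBoundedUnder (· ≥ ·) Filter.atTop (fun t => |y t|) :=
    Filter.isBoundedUnder_of ⟨0, fun t => abs_nonneg (y t)⟩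
  have hcob : Filter.IsCoboundedUnder (· ≤ ·) Filter.atTop (fun t => |y t|) :=
    hbnd0.isCoboundedUnder_le
  set L := Filter.limsup (fun t => |y t|) Filter.atTop with hL_def
  have hL0 : 0 ≤ L := Filter.le_limsup_of_frequently_le
    ((Filter.Eventually.of_forall fun t => abs_nonneg (y t)).frequently) hbnd
  have hstep : ∀ ε > 0, L ≤ q * (L + ε) + ε := by
    intro ε hε
    have h1 : ∀ᶠ t in Filter.atTop, |y t| < L + ε :=
      Filter.eventually_lt_of_limsup_lt (by linarith) hbnd
    obtain ⟨T₁, hT₁⟩ := Filter.eventually_atTop.mp h1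
    obtain ⟨T₂', hT₂'⟩ := Filter.eventually_atTop.mp (hhtend.eventually_ge_atTop T₁)
    set T₂ := max T₂' t₀ with hT₂_def
    have hT₂0 : t₀ ≤ T₂ := le_max_right _ _
    have hLε : 0 < L + ε := by linarith
    have hptw : ∀ t, T₂ ≤ t → om * |y t| ≤ (Real.exp (-(al*(t-t₀))) * N₀
        + (T₂ - t₀) * (Real.exp (-(al*(t-T₂))) * (C*Bd))) + q*om*(L+ε) := by
      intro t ht2
      have ht0 : t₀ ≤ t := hT₂0.trans ht2
      have hsub1 : Set.uIcc t₀ T₂ ⊆ Set.uIcc t₀ t := by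
        rw [Set.uIcc_of_le hT₂0, Set.uIcc_of_le ht0]
        exact Set.Icc_subset_Icc (le_refl _) ht2
      have hsub2 : Set.uIcc T₂ t ⊆ Set.uIcc t₀ t := by
        rw [Set.uIcc_of_le ht2, Set.uIcc_of_le ht0]
        exact Set.Icc_subset_Icc hT₂0 (le_refl _)
      have hi1 := (hIosc t ht0).mono_set hsub1
      have hi2 := (hIosc t ht0).mono_set hsub2
      have hsplit : (∫ s in t₀..t, Real.exp (-(al*(t-s))) * |g s|)
          = (∫ s in t₀..T₂, Real.exp (-(al*(t-s))) * |g s|)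
          + ∫ s in T₂..t, Real.exp (-(al*(t-s))) * |g s| :=
        (intervalIntegral.integral_add_adjacent_intervals hi1 hi2).symm
      have hp1 : (∫ s in t₀..T₂, Real.exp (-(al*(t-s))) * |g s|)
          ≤ (T₂ - t₀) * (Real.exp (-(al*(t-T₂))) * (C*Bd)) := by
        have hmono : ∀ s ∈ Set.Icc t₀ T₂, Real.exp (-(al*(t-s))) * |g s|
            ≤ Real.exp (-(al*(t-T₂))) * (C*Bd) := by
          intro s hs
          have h1 : Real.exp (-(al*(t-s))) ≤ Real.exp (-(al*(t-T₂))) := by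
            apply Real.exp_le_exp.mpr
            have h1' : al*(t-T₂) ≤ al*(t-s) :=
              mul_le_mul_of_nonneg_left (by linarith [hs.2]) hal.le
            linarith
          have h2 : |g s| ≤ C*Bd := (hgbound s hs.1).trans
            (mul_le_mul_of_nonneg_left (hbd _) hC)
          exact mul_le_mul h1 h2 (abs_nonneg _) (Real.exp_nonneg _)
        have h3 := intervalIntegral.integral_mono_on hT₂0 hi1
          intervalIntegrable_const hmono
        rw [intervalIntegral.integral_const, smul_eq_mul] at h3
        refine h3.trans (le_of_eq (by ring))
      have hp2 : (∫ s in T₂..t, Real.exp (-(al*(t-s))) * |g s|) ≤ q*om*(L+ε) := by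
        have hmono : ∀ s ∈ Set.Icc T₂ t, Real.exp (-(al*(t-s))) * |g s|
            ≤ Real.exp (-(al*(t-s))) * (C*(L+ε)) := by
          intro s hs
          apply mul_le_mul_of_nonneg_left _ (Real.exp_nonneg _)
          have hs0 : t₀ ≤ s := hT₂0.trans hs.1
          refine (hgbound s hs0).trans ?_
          apply mul_le_mul_of_nonneg_left _ hC
          have hhs : T₁ ≤ h s := hT₂' s ((le_max_left _ _).trans hs.1)
          exact (hT₁ (h s) hhs).le
        have hcont2 : Continuous fun s : ℝ => Real.exp (-(al*(t-s))) * (C*(L+ε)) :=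
          (Real.continuous_exp.comp (continuous_const.mul
            (continuous_const.sub continuous_id)).neg).mul continuous_const
        have h2 := intervalIntegral.integral_mono_on ht2 hi2
          (hcont2.intervalIntegrable _ _) hmono
        refine h2.trans ?_
        rw [intervalIntegral.integral_mul_const]
        have h3 : (∫ s in T₂..t, Real.exp (-(al*(t-s)))) * (C*(L+ε))
            ≤ (1/al) * (C*(L+ε)) :=
          mul_le_mul_of_nonneg_right (aux_exp_integral_le al T₂ t hal)
            (mul_nonneg hC hLε.le)
        refine h3.trans (le_of_eq ?_)
        rw [← mul_assoc, hCal]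
      have hkey := hKEY t ht0
      rw [hsplit] at hkey
      linarith [hp1, hp2]
    have hdec1 : Tendsto (fun t : ℝ => Real.exp (-(al*(t-t₀))) * N₀
        + (T₂ - t₀) * (Real.exp (-(al*(t-T₂))) * (C*Bd))) atTop (nhds 0) := by
      have hb : ∀ b : ℝ, Tendsto (fun t : ℝ => Real.exp (-(al*(t-b)))) atTop (nhds 0) := by
        intro b
        apply Real.tendsto_exp_atBot.comp
        have h1 : Tendsto (fun t : ℝ => t - b) atTop atTop :=
          tendsto_atTop_add_const_right _ (-b) tendsto_id
        have h2 : Tendsto (fun t : ℝ => al*(t - b)) atTop atTop :=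
          h1.const_mul_atTop hal
        exact tendsto_neg_atBot_iff.mpr h2
      have := (((hb t₀).mul_const N₀)).add ((((hb T₂).mul_const (C*Bd))).const_mul (T₂ - t₀))
      simpa using this
    have hev : ∀ᶠ t in Filter.atTop, |y t| ≤ q*(L+ε) + ε := by
      have hsmall : ∀ᶠ t in Filter.atTop, (Real.exp (-(al*(t-t₀))) * N₀
          + (T₂ - t₀) * (Real.exp (-(al*(t-T₂))) * (C*Bd))) < om*ε :=
        hdec1.eventually_lt_const (mul_pos hom hε)
      filter_upwards [hsmall, Filter.eventually_ge_atTop T₂] with t h1 h2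
      have h3 := hptw t h2
      have h4 : om * |y t| < om*ε + q*om*(L+ε) := by linarith
      have h5 : om * (q*(L+ε) + ε) = om*ε + q*om*(L+ε) := by ring
      have h6 := (mul_lt_mul_iff_right₀ hom).mp (h4.trans_eq h5.symm)
      exact h6.le
    exact Filter.limsup_le_of_le hcob hev
  have hLq : L ≤ 0 := by
    have hLqL : L ≤ q * L := by
      apply le_of_forall_pos_le_add
      intro δ hδ
      have hq2 : (0:ℝ) < q + 2 := by linarith
      set ε := δ / (q + 2) with hε_def
      have hε : 0 < ε := by positivity
      have hst := hstep ε hε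
      have hqe : q * ε + ε ≤ δ := by
        have h7 : (q+1) * ε ≤ (q+2) * ε := by nlinarith
        have h8 : (q+2) * ε = δ := by
          rw [hε_def, mul_div_cancel₀ _ hq2.ne']
        nlinarith
      nlinarith [hst]
    by_contra hpos
    push_neg at hpos
    nlinarith [mul_pos h1q hpos]
  rw [Metric.tendsto_atTop]
  intro ε hε
  have h1 : ∀ᶠ t in Filter.atTop, |y t| < ε :=
    Filter.eventually_lt_of_limsup_lt (lt_of_le_of_lt hLq hε) hbnd
  obtain ⟨N, hN⟩ := Filter.eventually_atTop.mp h1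
  refine ⟨N, fun n hn => ?_⟩
  rw [Real.dist_eq]
  exact hN n hn
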